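/- Fix even d and n > 2d+2, and a partition of {1,...,n} into sets A and B with |A| ∈ {⌈n/2⌉, ⌊n/2⌋} and |B| = n − |A|. Define C ⊆ {0,1}^n as the complement of the union of all (n−d−1)-dimensional subcubes whose anchors are (d+1)-coordinate assignments that are constant: all zeros if the majority of the d+1 anchor coordinates lie in A, and all ones if the majority lie in B. Then the VC dimension of C is exactly d. -/

import Mathlib

open Finset

/-- A concept class `C` shatters a coordinate set `I` if every assignment of
values to the coordinates in `I` is realized by some concept in `C`. -/
def Shatters {α : Type*} (C : Finset (α → Bool)) (I : Finset α) : Prop :=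
  ∀ f : α → Bool, ∃ c ∈ C, ∀ i ∈ I, c i = f i

/-- The VC dimension of a concept class: the largest cardinality of a shattered
coordinate set. -/
noncomputable def vcDim {α : Type*} [Fintype α] [DecidableEq α]
    (C : Finset (α → Bool)) : ℕ :=
  letI := Classical.decPred (Shatters C)
  (Finset.univ.filter (Shatters C)).sup Finset.card

/-- The subcube with free coordinate set `S` and anchor `a`: all vectors that
agree with `a` outside `S`.  Its dimension is `S.card`. -/
def subcube {α : Type*} [Fintype α] [DecidableEq α] (S : Finset α) (a : α → Bool) :
    Finset (α → Bool) :=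
  Finset.univ.filter fun c => ∀ i ∉ S, c i = a i

/-- The union `𝒜` of all `(n-d-1)`-cubes with all-zero anchors of size `d+1`
whose majority of anchor coordinates lies in `A`. -/
def zeroAnchored (n d : ℕ) (A : Finset (Fin n)) : Finset (Fin n → Bool) :=
  Finset.univ.filter fun v => ∃ T : Finset (Fin n), T.card = d + 1 ∧
    d + 1 < 2 * (T ∩ A).card ∧ ∀ i ∈ T, v i = false

/-- The union `ℬ` of all `(n-d-1)`-cubes with all-one anchors of size `d+1`
whose majority of anchor coordinates lies in `B`. -/
def oneAnchored (n d : ℕ) (B : Finset (Fin n)) : Finset (Fin n → Bool) :=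
  Finset.univ.filter fun v => ∃ T : Finset (Fin n), T.card = d + 1 ∧
    d + 1 < 2 * (T ∩ B).card ∧ ∀ i ∈ T, v i = true

/-- The class `C` of the construction: the complement of the complete union of
constant-anchored `(n-d-1)`-cubes. -/
def constructionClass (n d : ℕ) (A B : Finset (Fin n)) : Finset (Fin n → Bool) :=
  Finset.univ \ (zeroAnchored n d A ∪ oneAnchored n d B)


lemma shatters_mono {α : Type*} (C : Finset (α → Bool)) {I J : Finset α} (h : J ⊆ I)
    (hI : Shatters C I) : Shatters C J := fun f => by
  obtain ⟨c, hc, ha⟩ := hI f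
  exact ⟨c, hc, fun i hi => ha i (h hi)⟩

lemma no_shatter (n d : ℕ) (hdeven : Even d) (A B : Finset (Fin n)) (hB : B = Aᶜ)
    (J : Finset (Fin n)) (hJ : J.card = d + 1)
    (h : Shatters (constructionClass n d A B) J) : False := by
  have hsplit : (J ∩ A).card + (J ∩ B).card = d + 1 := by
    subst hB
    rw [← Finset.sdiff_eq_inter_compl, Finset.card_inter_add_card_sdiff]
    exact hJ
  obtain ⟨k, hk⟩ := hdeven
  rcases lt_or_ge (d + 1) (2 * (J ∩ A).card) with hmaj | hmaj
  · obtain ⟨c, hc, hval⟩ := h (fun _ => false)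
    rw [constructionClass, Finset.mem_sdiff, Finset.mem_union] at hc
    exact hc.2 (Or.inl (Finset.mem_filter.mpr ⟨Finset.mem_univ _, J, hJ, hmaj, hval⟩))
  · have hmaj' : d + 1 < 2 * (J ∩ B).card := by omega
    obtain ⟨c, hc, hval⟩ := h (fun _ => true)
    rw [constructionClass, Finset.mem_sdiff, Finset.mem_union] at hc
    exact hc.2 (Or.inr (Finset.mem_filter.mpr ⟨Finset.mem_univ _, J, hJ, hmaj', hval⟩))

lemma lower_shatter (n d : ℕ) (A B : Finset (Fin n)) (hB : B = Aᶜ)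
    (IA IB : Finset (Fin n)) (hIA : IA ⊆ A) (hIB : IB ⊆ B)
    (hcA : 2 * IA.card ≤ d) (hcB : 2 * IB.card ≤ d) :
    Shatters (constructionClass n d A B) (IA ∪ IB) := by
  classical
  intro f
  refine ⟨fun i => if i ∈ IA ∪ IB then f i else decide (i ∈ A), ?_, ?_⟩
  · rw [constructionClass, Finset.mem_sdiff]
    refine ⟨Finset.mem_univ _, ?_⟩
    rw [Finset.mem_union]
    rintro (hmem | hmem)
    · rw [zeroAnchored, Finset.mem_filter] at hmem
      obtain ⟨-, T, hT, hmaj, hval⟩ := hmem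
      have hsub : T ∩ A ⊆ IA := by
        intro i hi
        rw [Finset.mem_inter] at hi
        have hv := hval i hi.1
        by_cases hmem2 : i ∈ IA ∪ IB
        · rcases Finset.mem_union.mp hmem2 with h1 | h1
          · exact h1
          · have : i ∈ Aᶜ := hB ▸ hIB h1
            simp only [Finset.mem_compl] at this
            exact absurd hi.2 this
        · simp only [if_neg hmem2] at hv
          simp [hi.2] at hv
      have := Finset.card_le_card hsub
      omega
    · rw [oneAnchored, Finset.mem_filter] at hmem
      obtain ⟨-, T, hT, hmaj, hval⟩ := hmem
      have hsub : T ∩ B ⊆ IB := by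
        intro i hi
        rw [Finset.mem_inter] at hi
        have hiA : i ∉ A := by
          have : i ∈ Aᶜ := hB ▸ hi.2
          simpa using this
        have hv := hval i hi.1
        by_cases hmem2 : i ∈ IA ∪ IB
        · rcases Finset.mem_union.mp hmem2 with h1 | h1
          · exact absurd (hIA h1) hiA
          · exact h1
        · simp only [if_neg hmem2] at hv
          simp only [decide_eq_true_eq] at hv
          exact absurd hv hiA
      have := Finset.card_le_card hsub
      omega
  · intro i hi
    simp [hi]

/-- For even `d`, `n > 2d+2` and a near-equal partition `A`, `B` of the
coordinates, the class `C` of the construction has VC dimension exactly `d`. -/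
theorem construction_vcDim (n d : ℕ) (hdeven : Even d) (hn : 2 * d + 2 < n)
    (A B : Finset (Fin n)) (hB : B = Aᶜ)
    (hA : A.card = (n + 1) / 2 ∨ A.card = n / 2) :
    vcDim (constructionClass n d A B) = d := by
  classical
  apply le_antisymm
  · unfold _root_.vcDim
    apply Finset.sup_le
    intro I hI
    rw [Finset.mem_filter] at hI
    by_contra hlt
    push_neg at hlt
    obtain ⟨J, hJI, hJ⟩ := Finset.exists_subset_card_eq (show d + 1 ≤ I.card by omega)
    exact no_shatter n d hdeven A B hB J hJ (shatters_mono _ hJI hI.2)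
  · have hAcard : d / 2 ≤ A.card := by rcases hA with h | h <;> omega
    have hBcard' : B.card = n - A.card := by
      rw [hB, Finset.card_compl, Fintype.card_fin]
    have hBcard : d / 2 ≤ B.card := by rcases hA with h | h <;> omega
    obtain ⟨IA, hIAsub, hIAcard⟩ := Finset.exists_subset_card_eq hAcard
    obtain ⟨IB, hIBsub, hIBcard⟩ := Finset.exists_subset_card_eq hBcard
    have hdisj : Disjoint IA IB := by
      rw [hB] at hIBsub
      exact disjoint_compl_right.mono hIAsub hIBsub
    obtain ⟨k, hk⟩ := hdeven
    have hcard : (IA ∪ IB).card = d := by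
      rw [Finset.card_union_of_disjoint hdisj]
      omega
    have hsh := lower_shatter n d A B hB IA IB hIAsub hIBsub (by omega) (by omega)
    unfold _root_.vcDim
    calc d = (IA ∪ IB).card := hcard.symm
      _ ≤ _ := Finset.le_sup (Finset.mem_filter.mpr ⟨Finset.mem_univ _, hsh⟩)
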